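/- Let I be a monomial ideal with lcm-lattice L, and let I' be the subideal of I generated by the minimal generators of I not divisible by a fixed variable x_t, with lcm-lattice L'. Then L' is a sublattice of L, and for every σ ∈ L', the height of σ in L equals the height of σ in L'. -/
import Mathlib


noncomputable section

abbrev Mon (n : ℕ) : Type := Fin (n+1) →₀ ℕ

/-- height of σ in a lattice L of monomials: the length of the longest chain in `[1, σ] ∩ L`
ending at σ (the bottom `1`, i.e. the zero exponent vector, belongs to `L`). -/
def heightIn {n : ℕ} (L : Set (Mon n)) (σ : Mon n) : ℕ :=
  sSup {r : ℕ | ∃ c : Fin (r+1) → Mon n, StrictMono c ∧ (∀ i, c i ∈ L ∧ c i ≤ σ) ∧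
    c (Fin.last r) = σ}

/-- the lcm lattice of a set of monomials: all lcms (pointwise sups) of subsets,
including the bottom element `1` (the empty lcm). -/
def lcmLattice {n : ℕ} (G : Finset (Mon n)) : Finset (Mon n) :=
  G.powerset.image fun F => F.sup id

/-- Let `I` be a monomial ideal with minimal generating set `G` and
lcm-lattice `L`, and `I'` the subideal generated by the minimal generators not divisible by a
fixed variable `x_t`, with lcm-lattice `L'`.  Then `L'` is a sublattice of `L` (it is contained
in `L` and closed under lcm), and for every `σ ∈ L'`, the height of `σ` in `L` equals its
height in `L'`. -/

lemma mem_lcmLattice {n : ℕ} {G : Finset (Mon n)} {σ : Mon n} :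
    σ ∈ lcmLattice G ↔ ∃ F, F ⊆ G ∧ F.sup id = σ := by
  simp [lcmLattice, Finset.mem_image, Finset.mem_powerset]

theorem stmt6 {n : ℕ}
    (G : Finset (Mon n)) (hG0 : ∀ g ∈ G, g ≠ 0)
    (hGmin : ∀ g ∈ G, ∀ g' ∈ G, g ≤ g' → g = g')
    (t : Fin (n+1)) (G' : Finset (Mon n)) (hG' : G' = G.filter (fun g => g t = 0))
    (L L' : Finset (Mon n)) (hL : L = lcmLattice G) (hL' : L' = lcmLattice G') :
    L' ⊆ L ∧ (∀ a ∈ L', ∀ b ∈ L', a ⊔ b ∈ L') ∧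
    ∀ σ ∈ L', heightIn (L : Set (Mon n)) σ = heightIn (L' : Set (Mon n)) σ := by
  subst hG' hL hL'
  set G' := G.filter (fun g => g t = 0) with hG'
  -- key facts
  have hsub : lcmLattice G' ⊆ lcmLattice G := by
    intro σ hσ
    rcases mem_lcmLattice.mp hσ with ⟨F, hF, rfl⟩
    exact mem_lcmLattice.mpr ⟨F, hF.trans (Finset.filter_subset _ _), rfl⟩
  have hzero : ∀ σ ∈ lcmLattice G', σ t = 0 := by
    intro σ hσ
    rcases mem_lcmLattice.mp hσ with ⟨F, hF, rfl⟩
    have : (F.sup id) t = F.sup (fun g : Mon n => g t) := by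
      exact Finset.comp_sup_eq_sup_comp (fun f : Mon n => f t)
        (fun x y => by simp [Finsupp.sup_apply]) rfl
    rw [this]
    refine Nat.le_zero.mp (Finset.sup_le fun g hg => ?_)
    have := hF hg
    simp only [hG', Finset.mem_filter] at this
    exact le_of_eq this.2
  have hdown : ∀ σ ∈ lcmLattice G', ∀ τ ∈ lcmLattice G, τ ≤ σ → τ ∈ lcmLattice G' := by
    intro σ hσ τ hτ hle
    rcases mem_lcmLattice.mp hτ with ⟨F, hF, rfl⟩
    refine mem_lcmLattice.mpr ⟨F, ?_, rfl⟩
    intro g hg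
    simp only [hG', Finset.mem_filter]
    refine ⟨hF hg, ?_⟩
    have hgτ : g ≤ F.sup id := Finset.le_sup (f := id) hg
    have h1 : g t ≤ σ t := le_trans (hgτ t) (hle t)
    have h0 := hzero σ hσ
    omega
  refine ⟨hsub, ?_, ?_⟩
  · intro a ha b hb
    rcases mem_lcmLattice.mp ha with ⟨F₁, hF₁, rfl⟩
    rcases mem_lcmLattice.mp hb with ⟨F₂, hF₂, rfl⟩
    exact mem_lcmLattice.mpr ⟨F₁ ∪ F₂, Finset.union_subset hF₁ hF₂,
      by rw [Finset.sup_union]⟩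
  · intro σ hσ
    unfold heightIn
    congr 1
    ext r
    constructor <;> rintro ⟨c, hc, hmem, hlast⟩
    · exact ⟨c, hc, fun i => ⟨hdown σ hσ (c i) (hmem i).1 (hmem i).2, (hmem i).2⟩, hlast⟩
    · exact ⟨c, hc, fun i => ⟨hsub (hmem i).1, (hmem i).2⟩, hlast⟩
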